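/- If A ⪯ₙ₊₁ B (A is an (n+1)-elementary substructure of B), then there exists a structure C such that B embeds n-elementarily into C and A embeds elementarily into C, compatibly with the inclusion of A into B. -/

import Mathlib

open FirstOrder

universe u

namespace InfinitaryForcing

variable (L : FirstOrder.Language.{u, u})

/-- Infinitary formulas of `L_{∞,ω}`: set-indexed conjunctions and disjunctions,
finitary quantification, free variables among `Fin n`. -/
inductive InfForm : ℕ → Type (u + 1)
  | equal {n : ℕ} (t₁ t₂ : L.Term (Fin n)) : InfForm n
  | rel {n l : ℕ} (R : L.Relations l) (ts : Fin l → L.Term (Fin n)) : InfForm n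
  | not {n : ℕ} (φ : InfForm n) : InfForm n
  | disj {n : ℕ} {ι : Type u} (Φ : ι → InfForm n) : InfForm n
  | conj {n : ℕ} {ι : Type u} (Φ : ι → InfForm n) : InfForm n
  | ex {n : ℕ} (φ : InfForm (n + 1)) : InfForm n
  | all {n : ℕ} (φ : InfForm (n + 1)) : InfForm n

variable {L}

/-- Tarskian satisfaction for infinitary formulas. -/
def Realize : ∀ {n : ℕ}, InfForm L n → ∀ (M : Type u), L.Structure M → (Fin n → M) → Prop
  | _, .equal t₁ t₂, _M, S, v => letI := S; t₁.realize v = t₂.realize v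
  | _, .rel R ts, _M, S, v => letI := S; Language.Structure.RelMap R fun i => (ts i).realize v
  | _, .not φ, M, S, v => ¬ Realize φ M S v
  | _, .disj Φ, M, S, v => ∃ i, Realize (Φ i) M S v
  | _, .conj Φ, M, S, v => ∀ i, Realize (Φ i) M S v
  | _, .ex φ, M, S, v => ∃ b : M, Realize φ M S (Fin.snoc v b)
  | _, .all φ, M, S, v => ∀ b : M, Realize φ M S (Fin.snoc v b)

/-- Elementary embeddings, with the structures made explicit. -/
abbrev ElemEmb (M N : Type u) (SM : L.Structure M) (SN : L.Structure N) : Type u :=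
  @FirstOrder.Language.ElementaryEmbedding L M N SM SN

/-- The strong forcing relation `A ⊩ ψ(ā)`, where conditions are structures
ordered by elementary extension. -/
def Forces : ∀ {n : ℕ}, InfForm L n → ∀ (M : Type u), L.Structure M → (Fin n → M) → Prop
  | _, .equal t₁ t₂, _M, S, v => letI := S; t₁.realize v = t₂.realize v
  | _, .rel R ts, _M, S, v => letI := S; Language.Structure.RelMap R fun i => (ts i).realize v
  | _, .not φ, M, S, v =>
      ∀ (N : Type u) (SN : L.Structure N) (f : ElemEmb M N S SN),
        ¬ Forces φ N SN (fun i => f.toFun (v i))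
  | _, .disj Φ, M, S, v => ∃ i, Forces (Φ i) M S v
  | _, .conj Φ, M, S, v =>
      ∀ (N : Type u) (SN : L.Structure N) (f : ElemEmb M N S SN) (i : _),
        ∃ (P : Type u) (SP : L.Structure P) (g : ElemEmb N P SN SP),
          Forces (Φ i) P SP (fun k => g.toFun (f.toFun (v k)))
  | _, .ex φ, M, S, v => ∃ b : M, Forces φ M S (Fin.snoc v b)
  | _, .all φ, M, S, v =>
      ∀ (N : Type u) (SN : L.Structure N) (f : ElemEmb M N S SN) (b : N),
        ∃ (P : Type u) (SP : L.Structure P) (g : ElemEmb N P SN SP),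
          Forces φ P SP (Fin.snoc (fun k => g.toFun (f.toFun (v k))) (g.toFun b))

/-- `M` decides `ψ(v)` if it strongly forces `ψ(v)` or `¬ψ(v)`. -/
def Decides {n : ℕ} (ψ : InfForm L n) (M : Type u) (S : L.Structure M) (v : Fin n → M) : Prop :=
  Forces ψ M S v ∨ Forces ψ.not M S v

/-- The weak forcing relation `A ⊩* ψ := A ⊩ ¬¬ψ`. -/
def WForces {n : ℕ} (ψ : InfForm L n) (M : Type u) (S : L.Structure M) (v : Fin n → M) : Prop :=
  Forces ψ.not.not M S v

variable (L)

/-- Finitary (`L_{ω,ω}`) formulas among the infinitary ones. -/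
inductive InfForm.IsFinitary : ∀ {n : ℕ}, InfForm L n → Prop
  | equal {n} (t₁ t₂ : L.Term (Fin n)) : IsFinitary (.equal t₁ t₂)
  | rel {n l} (R : L.Relations l) (ts : Fin l → L.Term (Fin n)) : IsFinitary (.rel R ts)
  | not {n} {φ : InfForm L n} : IsFinitary φ → IsFinitary φ.not
  | disj {n} {ι : Type u} (_ : Finite ι) {Φ : ι → InfForm L n} :
      (∀ i, IsFinitary (Φ i)) → IsFinitary (.disj Φ)
  | conj {n} {ι : Type u} (_ : Finite ι) {Φ : ι → InfForm L n} :
      (∀ i, IsFinitary (Φ i)) → IsFinitary (.conj Φ)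
  | ex {n} {φ : InfForm L (n + 1)} : IsFinitary φ → IsFinitary φ.ex
  | all {n} {φ : InfForm L (n + 1)} : IsFinitary φ → IsFinitary φ.all

/-- Quantifier-free infinitary formulas. -/
inductive InfForm.IsQF : ∀ {n : ℕ}, InfForm L n → Prop
  | equal {n} (t₁ t₂ : L.Term (Fin n)) : IsQF (.equal t₁ t₂)
  | rel {n l} (R : L.Relations l) (ts : Fin l → L.Term (Fin n)) : IsQF (.rel R ts)
  | not {n} {φ : InfForm L n} : IsQF φ → IsQF φ.not
  | disj {n} {ι : Type u} {Φ : ι → InfForm L n} : (∀ i, IsQF (Φ i)) → IsQF (.disj Φ)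
  | conj {n} {ι : Type u} {Φ : ι → InfForm L n} : (∀ i, IsQF (Φ i)) → IsQF (.conj Φ)

/-- `L_{ω₁,ω}` formulas: all conjunctions and disjunctions are countable. -/
inductive InfForm.IsCtble : ∀ {n : ℕ}, InfForm L n → Prop
  | equal {n} (t₁ t₂ : L.Term (Fin n)) : IsCtble (.equal t₁ t₂)
  | rel {n l} (R : L.Relations l) (ts : Fin l → L.Term (Fin n)) : IsCtble (.rel R ts)
  | not {n} {φ : InfForm L n} : IsCtble φ → IsCtble φ.not
  | disj {n} {ι : Type u} (_ : Countable ι) {Φ : ι → InfForm L n} :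
      (∀ i, IsCtble (Φ i)) → IsCtble (.disj Φ)
  | conj {n} {ι : Type u} (_ : Countable ι) {Φ : ι → InfForm L n} :
      (∀ i, IsCtble (Φ i)) → IsCtble (.conj Φ)
  | ex {n} {φ : InfForm L (n + 1)} : IsCtble φ → IsCtble φ.ex
  | all {n} {φ : InfForm L (n + 1)} : IsCtble φ → IsCtble φ.all

/-- A fragment of `L_{∞,ω}`: a family of sets of formulas closed under negation
and subformulas. -/
structure IsFragment (𝔸 : ∀ n : ℕ, Set (InfForm L n)) : Prop where
  not_mem : ∀ {n} {φ : InfForm L n}, φ ∈ 𝔸 n → φ.not ∈ 𝔸 n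
  of_not : ∀ {n} {φ : InfForm L n}, φ.not ∈ 𝔸 n → φ ∈ 𝔸 n
  of_disj : ∀ {n} {ι : Type u} {Φ : ι → InfForm L n}, InfForm.disj Φ ∈ 𝔸 n → ∀ i, Φ i ∈ 𝔸 n
  of_conj : ∀ {n} {ι : Type u} {Φ : ι → InfForm L n}, InfForm.conj Φ ∈ 𝔸 n → ∀ i, Φ i ∈ 𝔸 n
  of_ex : ∀ {n} {φ : InfForm L (n + 1)}, φ.ex ∈ 𝔸 n → φ ∈ 𝔸 (n + 1)
  of_all : ∀ {n} {φ : InfForm L (n + 1)}, φ.all ∈ 𝔸 n → φ ∈ 𝔸 (n + 1)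

variable {L}

/-- `G` is `𝔸`-generic if it decides every instance of every formula of `𝔸`. -/
def IsGeneric (𝔸 : ∀ n : ℕ, Set (InfForm L n)) (G : Type u) (SG : L.Structure G) : Prop :=
  ∀ (n : ℕ) (ψ : InfForm L n), ψ ∈ 𝔸 n → ∀ v : Fin n → G, Decides ψ G SG v

variable (L)

mutual
  /-- Finitary `∃ₙ` formulas: `n` alternating blocks of quantifiers beginning
  with existentials, counting finite conjunctions/disjunctions as free. -/
  inductive IsEx : ℕ → ∀ {k : ℕ}, InfForm L k → Prop
    | equal {m k} (t₁ t₂ : L.Term (Fin k)) : IsEx m (.equal t₁ t₂)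
    | rel {m k l} (R : L.Relations l) (ts : Fin l → L.Term (Fin k)) : IsEx m (.rel R ts)
    | not {m k} {φ : InfForm L k} : IsAll m φ → IsEx m φ.not
    | disj {m k} {ι : Type u} (_ : Finite ι) {Φ : ι → InfForm L k} :
        (∀ i, IsEx m (Φ i)) → IsEx m (.disj Φ)
    | conj {m k} {ι : Type u} (_ : Finite ι) {Φ : ι → InfForm L k} :
        (∀ i, IsEx m (Φ i)) → IsEx m (.conj Φ)
    | ex {m k} {φ : InfForm L (k + 1)} : IsEx m φ → 1 ≤ m → IsEx m φ.ex
    | exStep {m k} {φ : InfForm L (k + 1)} : IsAll m φ → IsEx (m + 1) φ.ex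

  /-- Finitary `∀ₙ` formulas. -/
  inductive IsAll : ℕ → ∀ {k : ℕ}, InfForm L k → Prop
    | equal {m k} (t₁ t₂ : L.Term (Fin k)) : IsAll m (.equal t₁ t₂)
    | rel {m k l} (R : L.Relations l) (ts : Fin l → L.Term (Fin k)) : IsAll m (.rel R ts)
    | not {m k} {φ : InfForm L k} : IsEx m φ → IsAll m φ.not
    | disj {m k} {ι : Type u} (_ : Finite ι) {Φ : ι → InfForm L k} :
        (∀ i, IsAll m (Φ i)) → IsAll m (.disj Φ)
    | conj {m k} {ι : Type u} (_ : Finite ι) {Φ : ι → InfForm L k} :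
        (∀ i, IsAll m (Φ i)) → IsAll m (.conj Φ)
    | all {m k} {φ : InfForm L (k + 1)} : IsAll m φ → 1 ≤ m → IsAll m φ.all
    | allStep {m k} {φ : InfForm L (k + 1)} : IsEx m φ → IsAll (m + 1) φ.all
end

/-- `f : A → B` is an `n`-elementary map (`A ⪯ₙ B` when `f` is an inclusion):
every finitary `∃ₙ` or `∀ₙ` formula transfers along `f`. -/
def IsNElemMap (n : ℕ) {A B : Type u} (SA : L.Structure A) (SB : L.Structure B)
    (f : A → B) : Prop :=
  ∀ (k : ℕ) (φ : InfForm L k), (IsEx L n φ ∨ IsAll L n φ) →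
    ∀ v : Fin k → A, Realize φ A SA v ↔ Realize φ B SB (fun i => f (v i))

/-- `f : A → B` is an elementary map: every finitary formula transfers along `f`. -/
def IsElemMap {A B : Type u} (SA : L.Structure A) (SB : L.Structure B)
    (f : A → B) : Prop :=
  ∀ (k : ℕ) (φ : InfForm L k), InfForm.IsFinitary L φ →
    ∀ v : Fin k → A, Realize φ A SA v ↔ Realize φ B SB (fun i => f (v i))

section Aux

open FirstOrder Language

variable {L : FirstOrder.Language.{u, u}}

theorem realize_not {k : ℕ} (φ : InfForm L k) (M : Type u) (S : L.Structure M)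
    (v : Fin k → M) : Realize φ.not M S v ↔ ¬ Realize φ M S v := Iff.rfl

/-- Lift a relabeling map under one binder. -/
def liftR {k m : ℕ} (f : Fin k → Fin m) : Fin (k + 1) → Fin (m + 1) :=
  Fin.snoc (fun j => (f j).castSucc) (Fin.last m)

/-- Relabeling of free variables. -/
def relabel : ∀ {k m : ℕ}, (Fin k → Fin m) → InfForm L k → InfForm L m
  | _, _, f, .equal t₁ t₂ => .equal (t₁.relabel f) (t₂.relabel f)
  | _, _, f, .rel R ts => .rel R fun i => (ts i).relabel f
  | _, _, f, .not φ => .not (relabel f φ)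
  | _, _, f, .disj Φ => .disj fun i => relabel f (Φ i)
  | _, _, f, .conj Φ => .conj fun i => relabel f (Φ i)
  | _, _, f, .ex φ => .ex (relabel (liftR f) φ)
  | _, _, f, .all φ => .all (relabel (liftR f) φ)

theorem snoc_comp_liftR {k m : ℕ} (f : Fin k → Fin m) {M : Type u} (v : Fin m → M) (b : M) :
    (Fin.snoc v b : Fin (m+1) → M) ∘ liftR f = Fin.snoc (v ∘ f) b := by
  funext j
  refine Fin.lastCases ?_ (fun j' => ?_) j
  · simp [liftR, Fin.snoc_last]
  · simp [liftR, Fin.snoc_castSucc]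

theorem realize_relabel : ∀ {k m : ℕ} (f : Fin k → Fin m) (φ : InfForm L k)
    (M : Type u) (S : L.Structure M) (v : Fin m → M),
    Realize (relabel f φ) M S v ↔ Realize φ M S (v ∘ f) := by
  intro k m f φ
  induction φ generalizing m with
  | equal t₁ t₂ => intro M S v; simp [relabel, Realize, Term.realize_relabel]
  | rel R ts => intro M S v; simp [relabel, Realize, Term.realize_relabel]
  | not φ ih => intro M S v; exact not_congr (ih f M S v)
  | disj Φ ih => intro M S v; exact exists_congr fun i => ih i f M S v
  | conj Φ ih => intro M S v; exact forall_congr' fun i => ih i f M S v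
  | ex φ ih =>
      intro M S v
      refine exists_congr fun b => (ih (liftR f) M S _).trans ?_
      rw [snoc_comp_liftR]
  | all φ ih =>
      intro M S v
      refine forall_congr' fun b => (ih (liftR f) M S _).trans ?_
      rw [snoc_comp_liftR]

theorem class_mono : ∀ {k : ℕ} (φ : InfForm L k) (m : ℕ),
    (IsEx L m φ → IsEx L (m+1) φ) ∧ (IsAll L m φ → IsAll L (m+1) φ) := by
  intro k φ
  induction φ with
  | equal t₁ t₂ => exact fun m => ⟨fun _ => .equal _ _, fun _ => .equal _ _⟩
  | rel R ts => exact fun m => ⟨fun _ => .rel _ _, fun _ => .rel _ _⟩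
  | not φ ih =>
      refine fun m => ⟨fun h => ?_, fun h => ?_⟩
      · cases h with | not h => exact .not ((ih m).2 h)
  
      · cases h with | not h => exact .not ((ih m).1 h)
  | disj Φ ih =>
      refine fun m => ⟨fun h => ?_, fun h => ?_⟩
      · cases h with | disj hfin h => exact .disj hfin fun i => (ih i m).1 (h i)
      · cases h with | disj hfin h => exact .disj hfin fun i => (ih i m).2 (h i)
  | conj Φ ih =>
      refine fun m => ⟨fun h => ?_, fun h => ?_⟩
      · cases h with | conj hfin h => exact .conj hfin fun i => (ih i m).1 (h i)
      · cases h with | conj hfin h => exact .conj hfin fun i => (ih i m).2 (h i)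
  | ex φ ih =>
      refine fun m => ⟨fun h => ?_, fun h => ?_⟩
      · cases h with
        | ex h h1 => exact .ex ((ih m).1 h) (le_trans h1 (Nat.le_succ m))
        | exStep h => exact .exStep ((ih _).2 h)
      · cases h
  | all φ ih =>
      refine fun m => ⟨fun h => ?_, fun h => ?_⟩
      · cases h
      · cases h with
        | all h h1 => exact .all ((ih m).2 h) (le_trans h1 (Nat.le_succ m))
        | allStep h => exact .allStep ((ih _).1 h)

theorem isEx_mono_le {k : ℕ} {φ : InfForm L k} {m m' : ℕ} (h : m ≤ m') (he : IsEx L m φ) :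
    IsEx L m' φ := by
  induction h with
  | refl => exact he
  | step _ ih => exact (class_mono φ _).1 ih

theorem isAll_mono_le {k : ℕ} {φ : InfForm L k} {m m' : ℕ} (h : m ≤ m') (he : IsAll L m φ) :
    IsAll L m' φ := by
  induction h with
  | refl => exact he
  | step _ ih => exact (class_mono φ _).2 ih

theorem class_relabel : ∀ {k : ℕ} (φ : InfForm L k) (m : ℕ) {k₂ : ℕ} (f : Fin k → Fin k₂),
    (IsEx L m φ → IsEx L m (relabel f φ)) ∧ (IsAll L m φ → IsAll L m (relabel f φ)) := by
  intro k φ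
  induction φ with
  | equal t₁ t₂ => exact fun m _ f => ⟨fun _ => .equal _ _, fun _ => .equal _ _⟩
  | rel R ts => exact fun m _ f => ⟨fun _ => .rel _ _, fun _ => .rel _ _⟩
  | not φ ih =>
      refine fun m _ f => ⟨fun h => ?_, fun h => ?_⟩
      · cases h with | not h => exact .not ((ih m f).2 h)
      · cases h with | not h => exact .not ((ih m f).1 h)
  | disj Φ ih =>
      refine fun m _ f => ⟨fun h => ?_, fun h => ?_⟩
      · cases h with | disj hfin h => exact .disj hfin fun i => (ih i m f).1 (h i)
      · cases h with | disj hfin h => exact .disj hfin fun i => (ih i m f).2 (h i)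
  | conj Φ ih =>
      refine fun m _ f => ⟨fun h => ?_, fun h => ?_⟩
      · cases h with | conj hfin h => exact .conj hfin fun i => (ih i m f).1 (h i)
      · cases h with | conj hfin h => exact .conj hfin fun i => (ih i m f).2 (h i)
  | ex φ ih =>
      refine fun m _ f => ⟨fun h => ?_, fun h => ?_⟩
      · cases h with
        | ex h h1 => exact .ex ((ih m (liftR f)).1 h) h1
        | exStep h => exact .exStep ((ih _ (liftR f)).2 h)
      · cases h
  | all φ ih =>
      refine fun m _ f => ⟨fun h => ?_, fun h => ?_⟩
      · cases h
      · cases h with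
        | all h h1 => exact .all ((ih m (liftR f)).2 h) h1
        | allStep h => exact .allStep ((ih _ (liftR f)).1 h)

theorem class_finitary : ∀ {k : ℕ} (φ : InfForm L k) (m : ℕ),
    (IsEx L m φ → InfForm.IsFinitary L φ) ∧ (IsAll L m φ → InfForm.IsFinitary L φ) := by
  intro k φ
  induction φ with
  | equal t₁ t₂ => exact fun m => ⟨fun _ => .equal _ _, fun _ => .equal _ _⟩
  | rel R ts => exact fun m => ⟨fun _ => .rel _ _, fun _ => .rel _ _⟩
  | not φ ih =>
      refine fun m => ⟨fun h => ?_, fun h => ?_⟩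
      · cases h with | not h => exact .not ((ih m).2 h)
      · cases h with | not h => exact .not ((ih m).1 h)
  | disj Φ ih =>
      refine fun m => ⟨fun h => ?_, fun h => ?_⟩
      · cases h with | disj hfin h => exact .disj hfin fun i => (ih i m).1 (h i)
      · cases h with | disj hfin h => exact .disj hfin fun i => (ih i m).2 (h i)
  | conj Φ ih =>
      refine fun m => ⟨fun h => ?_, fun h => ?_⟩
      · cases h with | conj hfin h => exact .conj hfin fun i => (ih i m).1 (h i)
      · cases h with | conj hfin h => exact .conj hfin fun i => (ih i m).2 (h i)
  | ex φ ih =>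
      refine fun m => ⟨fun h => ?_, fun h => ?_⟩
      · cases h with
        | ex h _ => exact .ex ((ih m).1 h)
        | exStep h => exact .ex ((ih _).2 h)
      · cases h
  | all φ ih =>
      refine fun m => ⟨fun h => ?_, fun h => ?_⟩
      · cases h
      · cases h with
        | all h _ => exact .all ((ih m).2 h)
        | allStep h => exact .all ((ih _).1 h)

end Aux

section Aux2

open FirstOrder Language Filter

variable {L : FirstOrder.Language.{u, u}}

/-- Existentially close the last `d` variables. -/
def exs : ∀ (d : ℕ) {k : ℕ}, InfForm L (k + d) → InfForm L k
  | 0, _, φ => φ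
  | d+1, _, φ => exs d (InfForm.ex φ)

theorem append_elim0' {k : ℕ} {M : Sort*} (v : Fin k → M) (y : Fin 0 → M) :
    Fin.append v y = v := by
  funext j; exact Fin.append_left v _ j

theorem realize_exs : ∀ (d : ℕ) {k : ℕ} (φ : InfForm L (k + d)) (M : Type u)
    (S : L.Structure M) (v : Fin k → M),
    Realize (exs d φ) M S v ↔ ∃ y : Fin d → M, Realize φ M S (Fin.append v y) := by
  intro d
  induction d with
  | zero =>
      intro k φ M S v
      simp only [exs]
      exact ⟨fun h => ⟨Fin.elim0, by rwa [append_elim0']⟩,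
        fun ⟨y, hy⟩ => by rwa [append_elim0'] at hy⟩
  | succ d ih =>
      intro k φ M S v
      rw [show exs (d+1) φ = exs d (InfForm.ex φ) from rfl, ih]
      constructor
      · rintro ⟨y, b, hb⟩
        exact ⟨Fin.snoc y b, by rwa [Fin.append_snoc]⟩
      · rintro ⟨y, hy⟩
        refine ⟨Fin.init y, y (Fin.last d), ?_⟩
        show Realize φ M S (Fin.snoc (Fin.append v (Fin.init y)) (y (Fin.last d)))
        rw [← Fin.append_snoc, Fin.snoc_init_self]
        exact hy

theorem class_exs_aux {n : ℕ} : ∀ (d : ℕ) {k : ℕ} (φ : InfForm L (k + d)),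
    IsEx L (n+1) φ → IsEx L (n+1) (exs d φ) := by
  intro d
  induction d with
  | zero => intro k φ h; exact h
  | succ d ih =>
      intro k φ h
      exact ih (InfForm.ex φ) (.ex h (Nat.succ_le_succ (Nat.zero_le n)))

theorem class_exs {n : ℕ} (d : ℕ) {k : ℕ} (φ : InfForm L (k + d)) (h : IsAll L n φ) :
    IsEx L (n+1) (exs d φ) ∨ IsAll L (n+1) (exs d φ) := by
  cases d with
  | zero => exact Or.inr ((class_mono φ n).2 h)
  | succ d =>
      refine Or.inl ?_
      rw [show exs (d+1) φ = exs d (InfForm.ex φ) from rfl]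
      exact class_exs_aux d _ (.exStep h)

/-! ### Łoś's theorem for finitary infinitary formulas over an ultrapower -/

theorem realize_disj {k : ℕ} {ι : Type u} (Φ : ι → InfForm L k) (M : Type u)
    (S : L.Structure M) (v : Fin k → M) :
    Realize (.disj Φ) M S v ↔ ∃ i, Realize (Φ i) M S v := Iff.rfl

theorem realize_conj {k : ℕ} {ι : Type u} (Φ : ι → InfForm L k) (M : Type u)
    (S : L.Structure M) (v : Fin k → M) :
    Realize (.conj Φ) M S v ↔ ∀ i, Realize (Φ i) M S v := Iff.rfl

theorem realize_ex {k : ℕ} (φ : InfForm L (k+1)) (M : Type u)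
    (S : L.Structure M) (v : Fin k → M) :
    Realize (.ex φ) M S v ↔ ∃ b : M, Realize φ M S (Fin.snoc v b) := Iff.rfl

theorem realize_all {k : ℕ} (φ : InfForm L (k+1)) (M : Type u)
    (S : L.Structure M) (v : Fin k → M) :
    Realize (.all φ) M S v ↔ ∀ b : M, Realize φ M S (Fin.snoc v b) := Iff.rfl

section Los

variable {J : Type u} {V : Ultrafilter J} {A : Type u} [SA : L.Structure A] [Nonempty A]

theorem snoc_family_apply {k : ℕ} (F : Fin k → J → A) (G : J → A) (s : J) :
    (fun j => Fin.snoc (α := fun _ => J → A) F G j s : Fin (k+1) → A) =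
      Fin.snoc (fun j => F j s) (G s) := by
  funext j
  refine Fin.lastCases ?_ (fun j' => ?_) j
  · rw [Fin.snoc_last, Fin.snoc_last]
  · rw [Fin.snoc_castSucc, Fin.snoc_castSucc]

theorem snoc_coe_family {k : ℕ} (F : Fin k → J → A) (G : J → A) :
    (Fin.snoc (fun j => (F j : (V : Filter J).Product fun _ => A))
        (G : (V : Filter J).Product fun _ => A)
      : Fin (k+1) → (V : Filter J).Product fun _ => A) =
      fun j => ((Fin.snoc (α := fun _ => J → A) F G j : J → A) :
        (V : Filter J).Product fun _ => A) := by
  funext j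
  refine Fin.lastCases ?_ (fun j' => ?_) j
  · erw [Fin.snoc_last, Fin.snoc_last]
  · erw [Fin.snoc_castSucc, Fin.snoc_castSucc]

theorem los {k : ℕ} (φ : InfForm L k) (hfin : InfForm.IsFinitary L φ) :
    ∀ (F : Fin k → J → A),
    Realize φ ((V : Filter J).Product fun _ => A) inferInstance
        (fun j => (F j : (V : Filter J).Product fun _ => A)) ↔
      ∀ᶠ s in (V : Filter J), Realize φ A SA (fun j => F j s) := by
  classical
  induction hfin with
  | equal t₁ t₂ =>
      intro F
      show (Term.realize _ t₁ = Term.realize _ t₂) ↔ _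
      erw [Ultraproduct.term_realize_cast, Ultraproduct.term_realize_cast]
      exact Quotient.eq''
  | rel R ts =>
      intro F
      show Structure.RelMap R _ ↔ _
      have h1 : (fun i => Term.realize (fun j => (F j : (V : Filter J).Product fun _ => A)) (ts i)) =
          fun i => ((fun s => Term.realize (fun j => F j s) (ts i) : J → A) :
            (V : Filter J).Product fun _ => A) := by
        funext i
        exact Ultraproduct.term_realize_cast F (ts i)
      erw [h1]
      apply relMap_quotient_mk'
  | not hφ ih =>
      intro F
      exact (not_congr (ih F)).trans (Ultrafilter.eventually_not (f := V)).symm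
  | @disj k' ι hι Φ hΦ ih =>
      intro F
      erw [realize_disj]
      constructor
      · rintro ⟨i, hi⟩
        exact ((ih i F).1 hi).mono fun s hs => ⟨i, hs⟩
      · intro h
        by_contra hc
        push_neg at hc
        have h2 : ∀ i, ∀ᶠ s in (V : Filter J), ¬ Realize (Φ i) A SA (fun j => F j s) :=
          fun i => (Ultrafilter.eventually_not (f := V)).2 fun he => hc i ((ih i F).2 he)
        have h3 := (Filter.eventually_all.2 h2).and h
        rcases h3.exists with ⟨s, hs1, hs2⟩
        erw [realize_disj] at hs2
        rcases hs2 with ⟨i, hs2⟩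
        exact hs1 i hs2
  | @conj k' ι hι Φ hΦ ih =>
      intro F
      erw [realize_conj]
      exact (forall_congr' fun i => ih i F).trans Filter.eventually_all.symm
  | @ex k' ψ hψ ih =>
      intro F
      erw [realize_ex]
      constructor
      · rintro ⟨b, hb⟩
        rcases Quotient.exists_rep b with ⟨G, rfl⟩
        erw [show (Quotient.mk _ G : (V : Filter J).Product fun _ => A) =
          (G : (V : Filter J).Product fun _ => A) from rfl, snoc_coe_family F G] at hb
        refine ((ih (Fin.snoc F G)).1 hb).mono fun s hs => ?_
        erw [realize_ex]
        refine ⟨G s, ?_⟩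
        rwa [← snoc_family_apply]
      · intro h
        set G : J → A := fun s =>
          if hs : ∃ b : A, Realize ψ A SA (Fin.snoc (fun j => F j s) b) then hs.choose
          else Classical.arbitrary A with hG
        refine ⟨(G : (V : Filter J).Product fun _ => A), ?_⟩
        erw [snoc_coe_family F G]
        refine (ih (Fin.snoc F G)).2 (h.mono fun s hs => ?_)
        erw [snoc_family_apply]
        erw [realize_ex] at hs
        have hcs := hs.choose_spec
        have hGs : G s = hs.choose := by simp [hG, dif_pos hs]
        rwa [hGs]
  | @all k' ψ hψ ih =>
      intro F
      erw [realize_all]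
      constructor
      · intro h
        by_contra hc
        have h2 : ∀ᶠ s in (V : Filter J),
            ¬ Realize (InfForm.all ψ) A SA (fun j => F j s) :=
          (Ultrafilter.eventually_not (f := V)).2 hc
        set G : J → A := fun s =>
          if hs : ∃ b : A, ¬ Realize ψ A SA (Fin.snoc (fun j => F j s) b) then hs.choose
          else Classical.arbitrary A with hG
        have h3 := h (G : (V : Filter J).Product fun _ => A)
        erw [snoc_coe_family F G] at h3
        have h4 := ((ih (Fin.snoc F G)).1 h3).and h2
        rcases h4.exists with ⟨s, hs1, hs2⟩
        erw [snoc_family_apply] at hs1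
        erw [realize_all] at hs2
        push_neg at hs2
        rcases hs2 with ⟨b, hb⟩
        have hex : ∃ b : A, ¬ Realize ψ A SA (Fin.snoc (fun j => F j s) b) := ⟨b, hb⟩
        have hcs := hex.choose_spec
        have hGs : G s = hex.choose := by simp [hG, dif_pos hex]
        erw [hGs] at hs1
        exact hcs hs1
      · intro h b
        rcases Quotient.exists_rep b with ⟨G, rfl⟩
        erw [show (Quotient.mk _ G : (V : Filter J).Product fun _ => A) =
          (G : (V : Filter J).Product fun _ => A) from rfl, snoc_coe_family F G]
        refine (ih (Fin.snoc F G)).2 (h.mono fun s hs => ?_)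
        erw [snoc_family_apply]
        erw [realize_all] at hs
        exact hs (G s)

end Los


end Aux2

section Aux3

open FirstOrder Language

variable {L : FirstOrder.Language.{u, u}}

theorem gsnoc {B C : Type u} (g : B → C) {k : ℕ} (v : Fin k → B) (b : B) :
    (fun j => g (Fin.snoc (α := fun _ => B) v b j) : Fin (k+1) → C) =
      Fin.snoc (fun j => g (v j)) (g b) := by
  funext j
  refine Fin.lastCases ?_ (fun j' => ?_) j
  · rw [Fin.snoc_last, Fin.snoc_last]
  · rw [Fin.snoc_castSucc, Fin.snoc_castSucc]

variable {B C : Type u} {SB : L.Structure B} {SC : L.Structure C} {n : ℕ} {g : B → C}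

/-- Backward transfer of `IsEx m`-formulas, `m ≤ n`, from preservation of
`IsAll n`-formulas. -/
theorem transfer_bwd_ex
    (H : ∀ (k : ℕ) (φ : InfForm L k), IsAll L n φ → ∀ v : Fin k → B,
      Realize φ B SB v → Realize φ C SC (fun j => g (v j)))
    {k m : ℕ} {φ : InfForm L k} (hEx : IsEx L m φ) (hm : m ≤ n) (v : Fin k → B)
    (hC : Realize φ C SC (fun j => g (v j))) : Realize φ B SB v := by
  by_contra hB
  exact H k φ.not (.not (isEx_mono_le hm hEx)) v hB hC

theorem transfer_fwd_all
    (H : ∀ (k : ℕ) (φ : InfForm L k), IsAll L n φ → ∀ v : Fin k → B,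
      Realize φ B SB v → Realize φ C SC (fun j => g (v j)))
    {k m : ℕ} {φ : InfForm L k} (hAll : IsAll L m φ) (hm : m ≤ n) (v : Fin k → B)
    (hB : Realize φ B SB v) : Realize φ C SC (fun j => g (v j)) :=
  H k φ (isAll_mono_le hm hAll) v hB

theorem transfer_key
    (H : ∀ (k : ℕ) (φ : InfForm L k), IsAll L n φ → ∀ v : Fin k → B,
      Realize φ B SB v → Realize φ C SC (fun j => g (v j))) :
    ∀ {k : ℕ} (φ : InfForm L k) (m : ℕ), m ≤ n + 1 → ∀ v : Fin k → B,
    (IsEx L m φ → Realize φ B SB v → Realize φ C SC (fun j => g (v j))) ∧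
    (IsAll L m φ → Realize φ C SC (fun j => g (v j)) → Realize φ B SB v) := by
  intro k φ
  induction φ with
  | equal t₁ t₂ =>
      refine fun m hm v => ⟨fun _ hB => ?_, fun _ hC => ?_⟩
      · exact H _ _ (.equal t₁ t₂) v hB
      · by_contra hB
        exact H _ (InfForm.not (.equal t₁ t₂)) (.not (.equal t₁ t₂)) v hB hC
  | rel R ts =>
      refine fun m hm v => ⟨fun _ hB => ?_, fun _ hC => ?_⟩
      · exact H _ _ (.rel R ts) v hB
      · by_contra hB
        exact H _ (InfForm.not (.rel R ts)) (.not (.rel R ts)) v hB hC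
  | not ψ ih =>
      refine fun m hm v => ⟨fun h hB => ?_, fun h hC => ?_⟩
      · cases h with
        | not h => exact fun hC => hB ((ih m hm v).2 h hC)
      · cases h with
        | not h => exact fun hB => hC ((ih m hm v).1 h hB)
  | disj Φ ih =>
      refine fun m hm v => ⟨fun h hB => ?_, fun h hC => ?_⟩
      · cases h with
        | disj hfin h =>
            rcases hB with ⟨i, hi⟩
            exact ⟨i, (ih i m hm v).1 (h i) hi⟩
      · cases h with
        | disj hfin h =>
            rcases hC with ⟨i, hi⟩
            exact ⟨i, (ih i m hm v).2 (h i) hi⟩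
  | conj Φ ih =>
      refine fun m hm v => ⟨fun h hB => ?_, fun h hC => ?_⟩
      · cases h with
        | conj hfin h => exact fun i => (ih i m hm v).1 (h i) (hB i)
      · cases h with
        | conj hfin h => exact fun i => (ih i m hm v).2 (h i) (hC i)
  | ex ψ ih =>
      refine fun m hm v => ⟨fun h hB => ?_, fun h hC => ?_⟩
      · cases h with
        | ex h h1 =>
            rcases hB with ⟨b, hb⟩
            refine ⟨g b, ?_⟩
            rw [← gsnoc]
            exact (ih m hm (Fin.snoc v b)).1 h hb
        | @exStep m' _ _ h =>
            rcases hB with ⟨b, hb⟩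
            refine ⟨g b, ?_⟩
            rw [← gsnoc]
            exact transfer_fwd_all H h (Nat.le_of_succ_le_succ hm) (Fin.snoc v b) hb
      · cases h
  | all ψ ih =>
      refine fun m hm v => ⟨fun h hB => ?_, fun h hC => ?_⟩
      · cases h
      · cases h with
        | all h h1 =>
            intro b
            refine (ih m hm (Fin.snoc v b)).2 h ?_
            rw [gsnoc]
            exact hC (g b)
        | @allStep m' _ _ h =>
            intro b
            refine transfer_bwd_ex H h (Nat.le_of_succ_le_succ hm) (Fin.snoc v b) ?_
            rw [gsnoc]
            exact hC (g b)

theorem transfer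
    (H : ∀ (k : ℕ) (φ : InfForm L k), IsAll L n φ → ∀ v : Fin k → B,
      Realize φ B SB v → Realize φ C SC (fun j => g (v j))) :
    IsNElemMap L n SB SC g := by
  intro k φ hcls v
  rcases hcls with hEx | hAll
  · exact ⟨(transfer_key H φ n (Nat.le_succ n) v).1 hEx,
      transfer_bwd_ex H hEx (le_refl n) v⟩
  · exact ⟨fun hB => H k φ hAll v hB, (transfer_key H φ n (Nat.le_succ n) v).2 hAll⟩

end Aux3

section Aux4

open FirstOrder Language

variable {L : FirstOrder.Language.{u, u}}

theorem sat (n : ℕ) {A B : Type u} (SA : L.Structure A) (SB : L.Structure B)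
    [Nonempty A]
    (ia : A → B) (hinj : Function.Injective ia)
    (hi : IsNElemMap L (n + 1) SA SB ia)
    (N : ℕ) (ks : Fin N → ℕ) (φs : ∀ j, InfForm L (ks j)) (ts : ∀ j, Fin (ks j) → B)
    (hall : ∀ j, IsAll L n (φs j)) (hBr : ∀ j, Realize (φs j) B SB (ts j)) :
    ∃ w : B → A, (∀ a, w (ia a) = a) ∧ ∀ j, Realize (φs j) A SA (w ∘ ts j) := by
  classical
  -- the finite set of parameters from `B`
  set T : Finset B := Finset.univ.biUnion
    (fun j : Fin N => Finset.image (ts j) Finset.univ) with hT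
  have hmem : ∀ j p, ts j p ∈ T := by
    intro j p
    simp only [hT, Finset.mem_biUnion, Finset.mem_image, Finset.mem_univ, true_and]
    exact ⟨j, p, rfl⟩
  obtain ⟨m, ⟨e⟩⟩ : ∃ m : ℕ, Nonempty (↥T ≃ Fin m) := ⟨T.card, ⟨T.equivFin⟩⟩
  set tt : Fin m → B := fun q => ((e.symm q : ↥T) : B) with htt
  set r : ∀ j, Fin (ks j) → Fin m := fun j p => e ⟨ts j p, hmem j p⟩ with hr
  have httr : ∀ j, tt ∘ r j = ts j := by
    intro j; funext p
    simp only [htt, hr, Function.comp_apply, Equiv.symm_apply_apply]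
  -- the conjunction of all conditions
  set χ : InfForm L m :=
    .conj (fun (j : ULift.{u} (Fin N)) => relabel (r j.down) (φs j.down)) with hχ
  have hχall : IsAll L n χ :=
    .conj inferInstance (fun j => (class_relabel (φs j.down) n (r j.down)).2 (hall j.down))
  have hχB : Realize χ B SB tt :=
    (realize_conj _ B SB tt).2 fun j =>
      (realize_relabel (r j.down) (φs j.down) B SB tt).2
        (by rw [httr j.down]; exact hBr j.down)
  -- split parameters by whether they come from `A`
  set P : Fin m → Prop := fun q => tt q ∈ Set.range ia with hP
  obtain ⟨m₀, d, E, hEl⟩ : ∃ (m₀ d : ℕ) (E : Fin m ≃ Fin m₀ ⊕ Fin d),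
      ∀ q, P q ↔ ∃ x, E q = Sum.inl x := by
    refine ⟨_, _, (Equiv.sumCompl P).symm.trans
      ((Fintype.equivFin {q // P q}).sumCongr (Fintype.equivFin {q // ¬ P q})), fun q => ?_⟩
    constructor
    · intro hq
      refine ⟨Fintype.equivFin {q // P q} ⟨q, hq⟩, ?_⟩
      rw [Equiv.trans_apply, Equiv.sumCompl_symm_apply_of_pos (p := P) hq]
      rfl
    · rintro ⟨x, hx⟩
      by_contra hq
      rw [Equiv.trans_apply, Equiv.sumCompl_symm_apply_of_neg (p := P) hq] at hx
      simp [Equiv.sumCongr_apply] at hx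
  have hPsymm : ∀ q0 : Fin m₀, P (E.symm (Sum.inl q0)) := by
    intro q0
    by_contra h
    rcases (hEl (E.symm (Sum.inl q0))).2 ⟨q0, by simp⟩ with h2
    exact h h2
  set r2 : Fin m → Fin (m₀ + d) := fun q => finSumFinEquiv (E q) with hr2
  set χ' : InfForm L (m₀ + d) := relabel r2 χ with hχ'
  set ρ : InfForm L m₀ := exs d χ' with hρ
  -- choice of preimages in `A`
  set pre : B → A := fun b =>
    if h : b ∈ Set.range ia then h.choose else Classical.arbitrary A with hpredef
  have hiapre : ∀ (b : B) (h : b ∈ Set.range ia), ia (pre b) = b := by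
    intro b h
    simp only [hpredef, dif_pos h]
    exact h.choose_spec
  have hpre : ∀ a, pre (ia a) = a := by
    intro a
    exact hinj (hiapre (ia a) ⟨a, rfl⟩)
  set avec : Fin m₀ → A := fun q0 => pre (tt (E.symm (Sum.inl q0))) with havec
  have hia_avec : ∀ q0, ia (avec q0) = tt (E.symm (Sum.inl q0)) := by
    intro q0
    exact hiapre _ (hPsymm q0)
  set yB : Fin d → B := fun q1 => tt (E.symm (Sum.inr q1)) with hyB
  have happ : (Fin.append (fun q0 => ia (avec q0)) yB) ∘ r2 = tt := by
    funext q
    simp only [Function.comp_apply, hr2]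
    rcases hEq : E q with x | x
    · rw [finSumFinEquiv_apply_left, Fin.append_left, hia_avec, ← hEq, Equiv.symm_apply_apply]
    · rw [finSumFinEquiv_apply_right, Fin.append_right]
      show tt (E.symm (Sum.inr x)) = tt q
      rw [← hEq, Equiv.symm_apply_apply]
  -- `B` realizes the existential closure, hence so does `A`
  have hρB : Realize ρ B SB (fun q0 => ia (avec q0)) := by
    rw [hρ, realize_exs]
    refine ⟨yB, ?_⟩
    rw [hχ', realize_relabel, happ]
    exact hχB
  have hρcls : IsEx L (n+1) ρ ∨ IsAll L (n+1) ρ :=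
    class_exs d χ' ((class_relabel χ n r2).2 hχall)
  have hρA : Realize ρ A SA avec := (hi m₀ ρ hρcls avec).2 hρB
  rw [hρ, realize_exs] at hρA
  obtain ⟨yA, hyA⟩ := hρA
  rw [hχ', realize_relabel] at hyA
  set u : Fin m → A := (Fin.append avec yA) ∘ r2 with hu
  have hχu : Realize χ A SA u := hyA
  have hju : ∀ j : Fin N, Realize (φs j) A SA (u ∘ r j) := by
    intro j
    exact (realize_relabel (r j) (φs j) A SA u).1 ((realize_conj _ A SA u).1 hχu (ULift.up j))
  have hupre : ∀ q, P q → u q = pre (tt q) := by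
    intro q hq
    obtain ⟨x, hx⟩ := (hEl q).1 hq
    simp only [hu, Function.comp_apply, hr2, hx, finSumFinEquiv_apply_left, Fin.append_left, havec]
    rw [← hx, Equiv.symm_apply_apply]
  -- the assignment
  set w : B → A := fun b => if hb : b ∈ T then u (e ⟨b, hb⟩) else pre b with hwdef
  refine ⟨w, ?_, ?_⟩
  · intro a
    by_cases hb : ia a ∈ T
    · have hw1 : w (ia a) = u (e ⟨ia a, hb⟩) := by
        simp only [hwdef]; rw [dif_pos hb]
      rw [hw1]
      have httq : tt (e ⟨ia a, hb⟩) = ia a := by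
        simp only [htt, Equiv.symm_apply_apply]
      have hPq : P (e ⟨ia a, hb⟩) := by
        show tt (e ⟨ia a, hb⟩) ∈ Set.range ia
        rw [httq]; exact ⟨a, rfl⟩
      rw [hupre _ hPq, httq, hpre]
    · have hw1 : w (ia a) = pre (ia a) := by
        simp only [hwdef]; rw [dif_neg hb]
      rw [hw1, hpre]
  · intro j
    have hw : w ∘ ts j = u ∘ r j := by
      funext p
      simp only [Function.comp_apply, hwdef, hr]
      rw [dif_pos (hmem j p)]
    rw [hw]
    exact hju j

end Aux4

section Aux5

open FirstOrder Language Filter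

variable {L : FirstOrder.Language.{u, u}}

theorem empty_elem (n : ℕ) {A B : Type u} (SA : L.Structure A) (SB : L.Structure B)
    [IsEmpty A] [IsEmpty B] (i : A → B) (hi : IsNElemMap L (n + 1) SA SB i) :
    IsElemMap L SA SB i := by
  suffices h : ∀ (k : ℕ) (φ : InfForm L k) (v : Fin k → A),
      Realize φ A SA v ↔ Realize φ B SB (fun j => i (v j)) by
    intro k φ _ v; exact h k φ v
  intro k φ
  induction φ with
  | equal t₁ t₂ => intro v; exact hi _ _ (Or.inl (.equal _ _)) v
  | rel R ts => intro v; exact hi _ _ (Or.inl (.rel _ _)) v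
  | not ψ ih => intro v; exact not_congr (ih v)
  | disj Φ ih => intro v; exact exists_congr fun j => ih j v
  | conj Φ ih => intro v; exact forall_congr' fun j => ih j v
  | ex ψ ih =>
      intro v
      rw [realize_ex, realize_ex]
      exact iff_of_false (fun h => isEmptyElim h.choose) (fun h => isEmptyElim h.choose)
  | all ψ ih =>
      intro v
      rw [realize_all, realize_all]
      exact iff_of_true (fun b => isEmptyElim b) (fun b => isEmptyElim b)

end Aux5

/-- If `A ⪯ₙ₊₁ B`, then there is a structure `C` such that `B` embeds
`n`-elementarily into `C` and `A` embeds elementarily into `C`, compatibly with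
the inclusion of `A` into `B`. -/
theorem stmt3 {L : FirstOrder.Language.{u, u}} (n : ℕ) {A B : Type u}
    (SA : L.Structure A) (SB : L.Structure B)
    (i : A → B) (hi : IsNElemMap L (n + 1) SA SB i) :
    ∃ (C : Type u) (SC : L.Structure C) (g : B → C) (h : A → C),
      IsNElemMap L n SB SC g ∧ IsElemMap L SA SC h ∧
      ∀ a : A, g (i a) = h a := by
  classical
  by_cases hB : Nonempty B
  case neg =>
    haveI hBe : IsEmpty B := not_nonempty_iff.1 hB
    haveI : IsEmpty A := ⟨fun a => hBe.false (i a)⟩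
    refine ⟨B, SB, id, i, ?_, empty_elem n SA SB i hi, fun a => rfl⟩
    intro k φ hcls v
    exact Iff.rfl
  case pos =>
    obtain ⟨b₀⟩ := hB
    -- `A` is nonempty
    haveI hAne : Nonempty A := by
      have h := (hi 0 (InfForm.ex (.equal (.var 0) (.var 0)))
        (Or.inl (.exStep (.equal _ _))) Fin.elim0).2 ⟨b₀, rfl⟩
      obtain ⟨a, -⟩ := h
      exact ⟨a⟩
    -- `i` is injective
    have hinj : Function.Injective i := by
      intro a a' hEq
      have h2 := hi 2 (.equal (.var 0) (.var 1)) (Or.inl (.equal _ _)) ![a, a']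
      have h3 : Realize (InfForm.equal (L := L) (.var 0) (.var 1)) B SB
          (fun j => i (![a, a'] j)) := by
        show i (![a, a'] 0) = i (![a, a'] 1)
        simpa using hEq
      have h4 : (![a, a'] 0 : A) = ![a, a'] 1 := h2.2 h3
      simpa using h4
    -- the generating conditions on the index type `B → A`
    set Gens : Set (Set (B → A)) := {S | (∃ (k : ℕ) (φ : InfForm L k) (t : Fin k → B),
        IsAll L n φ ∧ Realize φ B SB t ∧ S = {w : B → A | Realize φ A SA (w ∘ t)}) ∨
        ∃ a : A, S = {w : B → A | w (i a) = a}} with hGens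
    have hFIP : ∀ t ⊆ Gens, Set.Finite t → (⋂₀ t).Nonempty := by
      intro t ht hfin
      set ls : List (Set (B → A)) := hfin.toFinset.toList with hls
      have hlsG : ∀ S ∈ ls, S ∈ Gens := fun S hS =>
        ht ((Set.Finite.mem_toFinset hfin).1 (Finset.mem_toList.1 hS))
      set N := ls.length with hN
      set Cnd := fun (j : Fin N) => (∃ (k : ℕ) (φ : InfForm L k) (t : Fin k → B),
        IsAll L n φ ∧ Realize φ B SB t ∧
          ls.get j = {w : B → A | Realize φ A SA (w ∘ t)}) with hCnd
      set triv : (k : ℕ) × (InfForm L k × (Fin k → B)) :=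
        ⟨0, InfForm.conj (fun x : PEmpty.{u+1} => x.elim), Fin.elim0⟩ with htriv
      set D : Fin N → (k : ℕ) × (InfForm L k × (Fin k → B)) := fun j =>
        if h : Cnd j then
          ⟨h.choose, h.choose_spec.choose, h.choose_spec.choose_spec.choose⟩
        else triv with hD
      have hDspec : ∀ j, Cnd j → IsAll L n (D j).2.1 ∧ Realize (D j).2.1 B SB (D j).2.2 ∧
          ls.get j = {w : B → A | Realize (D j).2.1 A SA (w ∘ (D j).2.2)} := by
        intro j h
        have heq : D j = ⟨h.choose, h.choose_spec.choose, h.choose_spec.choose_spec.choose⟩ := by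
          simp only [hD]; rw [dif_pos h]
        rw [heq]
        exact h.choose_spec.choose_spec.choose_spec
      have hDtriv : ∀ j, ¬ Cnd j → D j = triv := by
        intro j h
        simp only [hD]; rw [dif_neg h]
      have hall : ∀ j, IsAll L n (D j).2.1 := by
        intro j
        by_cases h : Cnd j
        · exact (hDspec j h).1
        · rw [hDtriv j h]
          exact .conj inferInstance (fun x => x.elim)
      have hBr : ∀ j, Realize (D j).2.1 B SB (D j).2.2 := by
        intro j
        by_cases h : Cnd j
        · exact (hDspec j h).2.1
        · rw [hDtriv j h]
          exact fun x => x.elim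
      obtain ⟨w, hwa, hwφ⟩ := sat n SA SB i hinj hi N (fun j => (D j).1)
        (fun j => (D j).2.1) (fun j => (D j).2.2) hall hBr
      refine ⟨w, ?_⟩
      intro S hS
      have hSls : S ∈ ls := Finset.mem_toList.2 ((Set.Finite.mem_toFinset hfin).2 hS)
      obtain ⟨idx, hidx, hEq⟩ := List.mem_iff_getElem.1 hSls
      set j : Fin N := ⟨idx, hidx⟩ with hj
      have hgetj : ls.get j = S := hEq
      rcases hlsG S hSls with ⟨k, φ, tb, hAll, hBφ, hSeq⟩ | ⟨a, hSeq⟩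
      · have hc : Cnd j := ⟨k, φ, tb, hAll, hBφ, by rw [hgetj, hSeq]⟩
        have h5 := (hDspec j hc).2.2
        rw [hgetj] at h5
        rw [h5]
        exact hwφ j
      · rw [hSeq]
        exact hwa a
    haveI hNB : (Filter.generate Gens).NeBot := Filter.generate_neBot_iff.2 hFIP
    set V : Ultrafilter (B → A) := Ultrafilter.of (Filter.generate Gens) with hV
    have hVgen : ∀ S ∈ Gens, S ∈ V := fun S hS =>
      (Ultrafilter.of_le (Filter.generate Gens)) (Filter.mem_generate_of_mem hS)
    letI : L.Structure A := SA
    have H : ∀ (k : ℕ) (φ : InfForm L k), IsAll L n φ → ∀ v : Fin k → B,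
        Realize φ B SB v →
        Realize φ ((V : Filter (B → A)).Product (fun _ => A)) inferInstance
          (fun j => ((fun w : B → A => w (v j) : (B → A) → A) :
            (V : Filter (B → A)).Product (fun _ => A))) := by
      intro k φ hAll v hBφ
      have hfin := (class_finitary φ n).2 hAll
      refine (los (V := V) φ hfin (fun j => fun w => w (v j))).2 ?_
      exact hVgen _ (Or.inl ⟨k, φ, v, hAll, hBφ, rfl⟩)
    refine ⟨(V : Filter (B → A)).Product (fun _ => A), inferInstance,
      fun b => ((fun w : B → A => w b : (B → A) → A) :
        (V : Filter (B → A)).Product (fun _ => A)),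
      fun a => ((fun _ : B → A => a : (B → A) → A) :
        (V : Filter (B → A)).Product (fun _ => A)),
      transfer H, ?_, ?_⟩
    · intro k φ hfin v
      have hlos := los (V := V) φ hfin (fun j => fun _ => v j)
      exact (hlos.trans Filter.eventually_const).symm
    · intro a
      refine Quotient.eq''.2 ?_
      exact hVgen _ (Or.inr ⟨a, rfl⟩)

end InfinitaryForcing
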